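/- With W_d as above, the renormalized quantity c^{-1} d^{1-H} W_d converges to 0 in L^2 as d → ∞, with E((d^{1-H}W_d)^2) ≤ C d^{1-2H} for H ∈ (1/2, 3/4), ≤ C log(d) d^{-1/2} for H = 3/4, and ≤ C d^{2H-2} for H ∈ (3/4, 1). -/

import Mathlib

open MeasureTheory ProbabilityTheory Finset Filter

private lemma rdz_mvt (q : ℝ) {x y : ℝ} (hx : 0 < x) (hxy : x < y) :
    ∃ c ∈ Set.Ioo x y, y ^ q - x ^ q = q * c ^ (q - 1) * (y - x) := by
  obtain ⟨c, hc, h⟩ := exists_hasDerivAt_eq_slope (fun z : ℝ => z ^ q)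
    (fun z : ℝ => q * z ^ (q - 1)) hxy
    (fun z hz => (Real.continuousAt_rpow_const z q
      (Or.inl (ne_of_gt (lt_of_lt_of_le hx hz.1)))).continuousWithinAt)
    (fun z hz => Real.hasDerivAt_rpow_const (Or.inl (ne_of_gt (hx.trans hz.1))))
  refine ⟨c, hc, ?_⟩
  rw [h, div_mul_cancel₀]
  exact sub_ne_zero.mpr (ne_of_gt hxy)

private lemma rdz_key_ge {q : ℝ} (hq : q < 0) (hq1 : 0 < q + 1) {x : ℝ} (hx : 0 < x) :
    (q + 1) * (x + 1) ^ q ≤ (x + 1) ^ (q + 1) - x ^ (q + 1) := by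
  obtain ⟨c, hc, h⟩ := rdz_mvt (q + 1) hx (by linarith : x < x + 1)
  have hxc : (x + 1) ^ q ≤ c ^ q :=
    Real.rpow_le_rpow_of_nonpos (hx.trans hc.1) hc.2.le hq.le
  have e1 : q + 1 - 1 = q := by ring
  have e2 : x + 1 - x = 1 := by ring
  rw [h, e1, e2, mul_one]
  exact mul_le_mul_of_nonneg_left hxc hq1.le

private lemma rdz_key_le {q : ℝ} (hq1 : q + 1 < 0) {x : ℝ} (hx : 0 < x) :
    (x + 1) ^ (q + 1) - x ^ (q + 1) ≤ (q + 1) * (x + 1) ^ q := by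
  obtain ⟨c, hc, h⟩ := rdz_mvt (q + 1) hx (by linarith : x < x + 1)
  have hxc : (x + 1) ^ q ≤ c ^ q :=
    Real.rpow_le_rpow_of_nonpos (hx.trans hc.1) hc.2.le (by linarith)
  have e1 : q + 1 - 1 = q := by ring
  have e2 : x + 1 - x = 1 := by ring
  rw [h, e1, e2, mul_one]
  exact mul_le_mul_of_nonpos_left hxc hq1.le

private lemma rdz_key_log {x : ℝ} (hx : 0 < x) :
    (x + 1)⁻¹ ≤ Real.log (x + 1) - Real.log x := by
  have h1 : (0:ℝ) < x / (x + 1) := by positivity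
  have h := Real.log_le_sub_one_of_pos h1
  rw [Real.log_div (ne_of_gt hx) (by positivity)] at h
  have : x / (x + 1) - 1 = -(x + 1)⁻¹ := by field_simp; ring
  rw [this] at h
  linarith

private lemma rdz_G_bound {H : ℝ} (hH1 : 1 / 2 < H) (hH2 : H < 1) {r : ℝ} (hr : 2 ≤ r) :
    0 ≤ (r + 1) ^ (2 * H) + (r - 1) ^ (2 * H) - 2 * r ^ (2 * H) ∧
    (r + 1) ^ (2 * H) + (r - 1) ^ (2 * H) - 2 * r ^ (2 * H) ≤ 8 * r ^ (2 * H - 2) := by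
  have hr1 : (0:ℝ) < r - 1 := by linarith
  have hr0 : (0:ℝ) < r := by linarith
  obtain ⟨c₁, hc₁, h₁⟩ := rdz_mvt (2 * H) hr0 (by linarith : r < r + 1)
  obtain ⟨c₂, hc₂, h₂⟩ := rdz_mvt (2 * H) hr1 (by linarith : r - 1 < r)
  obtain ⟨c₃, hc₃, h₃⟩ := rdz_mvt (2 * H - 1) hr1 (by linarith : r - 1 < r + 1)
  have e1 : r + 1 - r = 1 := by ring
  have e2 : r - (r - 1) = 1 := by ring
  have e3 : r + 1 - (r - 1) = 2 := by ring
  have e5 : 2 * H - 1 - 1 = 2 * H - 2 := by ring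
  rw [e1, mul_one] at h₁
  rw [e2, mul_one] at h₂
  rw [e3, e5] at h₃
  have hc₂0 : (0:ℝ) < c₂ := hr1.trans hc₂.1
  have hc₁0 : (0:ℝ) < c₁ := hr0.trans hc₁.1
  have hmono : c₂ ^ (2 * H - 1) ≤ c₁ ^ (2 * H - 1) :=
    Real.rpow_le_rpow hc₂0.le (le_of_lt (hc₂.2.trans hc₁.1)) (by linarith)
  have hup : c₁ ^ (2 * H - 1) ≤ (r + 1) ^ (2 * H - 1) :=
    Real.rpow_le_rpow hc₁0.le hc₁.2.le (by linarith)
  have hdn : (r - 1) ^ (2 * H - 1) ≤ c₂ ^ (2 * H - 1) :=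
    Real.rpow_le_rpow hr1.le hc₂.1.le (by linarith)
  constructor
  · nlinarith [h₁, h₂, hmono]
  · have h3b : c₃ ^ (2 * H - 2) ≤ (r - 1) ^ (2 * H - 2) :=
      Real.rpow_le_rpow_of_nonpos hr1 hc₃.1.le (by linarith)
    have hhalf : (r - 1) ^ (2 * H - 2) ≤ 2 * r ^ (2 * H - 2) := by
      have h5 : (r - 1) ^ (2 * H - 2) ≤ (r / 2) ^ (2 * H - 2) :=
        Real.rpow_le_rpow_of_nonpos (by linarith) (by linarith) (by linarith)
      have h6 : (r / 2) ^ (2 * H - 2) = r ^ (2 * H - 2) / 2 ^ (2 * H - 2) :=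
        Real.div_rpow hr0.le (by norm_num) _
      have h7 : (2:ℝ) ^ (-1:ℝ) ≤ 2 ^ (2 * H - 2) :=
        Real.rpow_le_rpow_of_exponent_le (by norm_num) (by linarith)
      rw [Real.rpow_neg_one] at h7
      have h8 : (0:ℝ) ≤ r ^ (2 * H - 2) := Real.rpow_nonneg hr0.le _
      have h9 : r ^ (2 * H - 2) / 2 ^ (2 * H - 2) ≤ 2 * r ^ (2 * H - 2) := by
        rw [div_le_iff₀ (by positivity)]
        nlinarith
      calc (r - 1) ^ (2 * H - 2) ≤ (r / 2) ^ (2 * H - 2) := h5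
        _ = r ^ (2 * H - 2) / 2 ^ (2 * H - 2) := h6
        _ ≤ 2 * r ^ (2 * H - 2) := h9
    have hc3nn : (0:ℝ) ≤ c₃ ^ (2 * H - 2) := Real.rpow_nonneg (by linarith [hc₃.1]) _
    have hrnn : (0:ℝ) ≤ (r - 1) ^ (2 * H - 2) := Real.rpow_nonneg hr1.le _
    have A1 : 2 * H * c₁ ^ (2 * H - 1) - 2 * H * c₂ ^ (2 * H - 1)
        ≤ 2 * H * ((r + 1) ^ (2 * H - 1) - (r - 1) ^ (2 * H - 1)) := by nlinarith [hup, hdn]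
    have B2 : 2 * H * ((r + 1) ^ (2 * H - 1) - (r - 1) ^ (2 * H - 1))
        ≤ 2 * (2 * (r - 1) ^ (2 * H - 2)) := by
      rw [h₃]
      nlinarith [h3b, hc3nn, hrnn]
    nlinarith [h₁, h₂, A1, B2, hhalf]

noncomputable def rdzG (H a : ℝ) : ℝ :=
  (|a + 1| ^ (2 * H) + |a - 1| ^ (2 * H) - 2 * |a| ^ (2 * H)) / 2

private lemma rdzG_neg (H a : ℝ) : rdzG H (-a) = rdzG H a := by
  unfold rdzG
  rw [show -a + 1 = -(a - 1) by ring, show -a - 1 = -(a + 1) by ring, abs_neg, abs_neg, abs_neg]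
  ring

private lemma rdzG_dist (H : ℝ) (k l : ℕ) :
    rdzG H ((k : ℝ) - l) = rdzG H ((Nat.dist k l : ℕ) : ℝ) := by
  rcases le_total l k with h | h
  · rw [Nat.dist_eq_sub_of_le_right h]
    congr 1
    push_cast [h]
    ring
  · rw [Nat.dist_eq_sub_of_le h, show (k : ℝ) - l = -((l : ℝ) - k) by ring, rdzG_neg]
    congr 1
    push_cast [h]
    ring

private lemma rdzG_sq_le {H : ℝ} (hH1 : 1 / 2 < H) (hH2 : H < 1) (m : ℕ) :
    (rdzG H (m : ℝ)) ^ 2 ≤ if m = 0 then 1 else 16 * (m : ℝ) ^ (4 * H - 4) := by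
  have h2H : (0:ℝ) < 2 * H := by linarith
  match m with
  | 0 =>
    simp [rdzG, Real.zero_rpow (ne_of_gt h2H)]
  | 1 =>
    simp only [Nat.cast_one, if_neg one_ne_zero, Nat.cast_ofNat]
    have : rdzG H 1 = ((2:ℝ) ^ (2 * H) - 2) / 2 := by
      unfold rdzG
      norm_num [Real.zero_rpow (ne_of_gt h2H)]
    rw [this, Real.one_rpow]
    have hlo : (2:ℝ) ^ (1:ℝ) ≤ 2 ^ (2 * H) :=
      Real.rpow_le_rpow_of_exponent_le (by norm_num) (by linarith)
    have hhi : (2:ℝ) ^ (2 * H) ≤ 2 ^ (2:ℝ) :=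
      Real.rpow_le_rpow_of_exponent_le (by norm_num) (by linarith)
    rw [Real.rpow_one] at hlo
    rw [show (2:ℝ) ^ (2:ℝ) = 4 by
      rw [show (2:ℝ) = ((2:ℕ):ℝ) by norm_num, Real.rpow_natCast]; norm_num] at hhi
    nlinarith
  | (n + 2) =>
    have hm : (2:ℝ) ≤ ((n + 2 : ℕ) : ℝ) := by push_cast; linarith [Nat.cast_nonneg (α := ℝ) n]
    have hm0 : (0:ℝ) < ((n + 2 : ℕ) : ℝ) := by linarith
    set r : ℝ := ((n + 2 : ℕ) : ℝ) with hrdef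
    obtain ⟨hA, hB⟩ := rdz_G_bound hH1 hH2 hm
    have habs : rdzG H r = ((r + 1) ^ (2 * H) + (r - 1) ^ (2 * H) - 2 * r ^ (2 * H)) / 2 := by
      unfold rdzG
      rw [abs_of_nonneg (by linarith), abs_of_nonneg (by linarith), abs_of_nonneg (by linarith)]
    rw [if_neg (by omega)]
    rw [habs]
    have hsq : (((r + 1) ^ (2 * H) + (r - 1) ^ (2 * H) - 2 * r ^ (2 * H)) / 2) ^ 2
        ≤ (4 * r ^ (2 * H - 2)) ^ 2 := by
      have h1 : ((r + 1) ^ (2 * H) + (r - 1) ^ (2 * H) - 2 * r ^ (2 * H)) / 2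
          ≤ 4 * r ^ (2 * H - 2) := by linarith
      have h2 : 0 ≤ ((r + 1) ^ (2 * H) + (r - 1) ^ (2 * H) - 2 * r ^ (2 * H)) / 2 := by linarith
      exact pow_le_pow_left₀ h2 h1 2
    refine hsq.trans ?_
    have : (r ^ (2 * H - 2)) ^ 2 = r ^ (4 * H - 4) := by
      rw [← Real.rpow_natCast (r ^ (2 * H - 2)) 2, ← Real.rpow_mul hm0.le]
      norm_num
      ring_nf
    nlinarith [Real.rpow_nonneg hm0.le (4 * H - 4), this]

private lemma rdz_count (b : ℕ → ℝ) (hb : ∀ r, 0 ≤ b r) (d : ℕ) :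
    ∑ k ∈ range d, ∑ l ∈ range d, b (Nat.dist k l) ≤ d * (2 * ∑ r ∈ range d, b r) := by
  have inner : ∀ k ∈ range d, ∑ l ∈ range d, b (Nat.dist k l) ≤ 2 * ∑ r ∈ range d, b r := by
    intro k hk
    have hkd : k + 1 ≤ d := mem_range.mp hk
    have hsplit : ∑ l ∈ range d, b (Nat.dist k l)
        = ∑ l ∈ Ico 0 (k + 1), b (Nat.dist k l) + ∑ l ∈ Ico (k + 1) d, b (Nat.dist k l) := by
      rw [range_eq_Ico, ← Finset.sum_Ico_consecutive _ (Nat.zero_le (k + 1)) hkd]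
    have part1 : ∑ l ∈ Ico 0 (k + 1), b (Nat.dist k l) ≤ ∑ r ∈ range d, b r := by
      rw [← range_eq_Ico]
      have e : ∀ l ∈ range (k + 1), b (Nat.dist k l) = b (k - l) := by
        intro l hl
        have := mem_range.mp hl
        rw [Nat.dist_eq_sub_of_le_right (by omega : l ≤ k)]
      rw [Finset.sum_congr rfl e]
      rw [show (∑ l ∈ range (k + 1), b (k - l)) = ∑ l ∈ range (k + 1), b (k + 1 - 1 - l) from rfl,
        Finset.sum_range_reflect]
      apply Finset.sum_le_sum_of_subset_of_nonneg
      · exact Finset.range_subset_range.mpr hkd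
      · intro i _ _; exact hb i
    have part2 : ∑ l ∈ Ico (k + 1) d, b (Nat.dist k l) ≤ ∑ r ∈ range d, b r := by
      rw [Finset.sum_Ico_eq_sum_range]
      have e : ∀ j ∈ range (d - (k + 1)), b (Nat.dist k (k + 1 + j)) = b (j + 1) := by
        intro j hj
        rw [Nat.dist_eq_sub_of_le (by omega : k ≤ k + 1 + j)]
        congr 1
        omega
      rw [Finset.sum_congr rfl e]
      have e2 : (∑ j ∈ range (d - (k + 1)), b (j + 1)) = ∑ r ∈ Ico 1 (d - (k + 1) + 1), b r := by
        rw [Finset.sum_Ico_eq_sum_range]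
        refine Finset.sum_congr ?_ fun j _ => by rw [Nat.add_comm]
        norm_num
      rw [e2]
      apply Finset.sum_le_sum_of_subset_of_nonneg
      · rw [range_eq_Ico]
        exact Finset.Ico_subset_Ico (by omega) (by omega)
      · intro i _ _; exact hb i
    rw [hsplit]
    linarith
  calc ∑ k ∈ range d, ∑ l ∈ range d, b (Nat.dist k l)
      ≤ ∑ _k ∈ range d, (2 * ∑ r ∈ range d, b r) := Finset.sum_le_sum inner
    _ = d * (2 * ∑ r ∈ range d, b r) := by
        rw [Finset.sum_const, card_range, nsmul_eq_mul]

private lemma rdz_T_lt {p : ℝ} (hp : p < -1) (d : ℕ) :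
    ∑ r ∈ Ico 1 d, (r : ℝ) ^ p ≤ 1 + 1 / (-1 - p) := by
  have hden : (0:ℝ) < -1 - p := by linarith
  have hpos : (0:ℝ) < 1 / (-1 - p) := div_pos one_pos hden
  have hpos2 : (0:ℝ) < (-1 - p)⁻¹ := inv_pos.mpr hden
  rcases le_or_gt d 2 with hd | hd
  · interval_cases d
    · simp; linarith
    · simp; linarith
    · rw [show Ico 1 2 = {1} from rfl]
      simp [Real.one_rpow]
      linarith
  · have hsplit : ∑ r ∈ Ico 1 d, (r : ℝ) ^ p
        = (1:ℝ) ^ p + ∑ r ∈ Ico 2 d, (r : ℝ) ^ p := by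
      rw [← Nat.cast_one, Finset.sum_eq_sum_Ico_succ_bot (by omega)]
      norm_num
    rw [hsplit, Real.one_rpow]
    have hkey : ∀ j : ℕ, (((2 + j : ℕ) : ℝ)) ^ p
        ≤ (((1 + j : ℕ):ℝ) ^ (p + 1) - ((2 + j : ℕ):ℝ) ^ (p + 1)) / (-1 - p) := by
      intro j
      have hx : (0:ℝ) < ((1 + j : ℕ) : ℝ) := by positivity
      have h := rdz_key_le (by linarith : p + 1 < 0) hx
      rw [le_div_iff₀ hden]
      have e : ((1 + j : ℕ) : ℝ) + 1 = ((2 + j : ℕ) : ℝ) := by push_cast; ring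
      rw [e] at h
      nlinarith [h]
    have htel : ∑ r ∈ Ico 2 d, (r : ℝ) ^ p
        ≤ (∑ j ∈ range (d - 2),
            (((1 + j : ℕ):ℝ) ^ (p + 1) - ((2 + j : ℕ):ℝ) ^ (p + 1))) / (-1 - p) := by
      rw [Finset.sum_Ico_eq_sum_range, Finset.sum_div]
      exact Finset.sum_le_sum fun j _ => hkey j
    have htel2 : (∑ j ∈ range (d - 2),
        (((1 + j : ℕ):ℝ) ^ (p + 1) - ((2 + j : ℕ):ℝ) ^ (p + 1))) ≤ 1 := by
      have e : ∀ j : ℕ, ((2 + j : ℕ):ℝ) ^ (p + 1) = ((1 + (j + 1) : ℕ):ℝ) ^ (p + 1) := by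
        intro j
        have : 2 + j = 1 + (j + 1) := by omega
        rw [this]
      have := Finset.sum_range_sub' (fun j => ((1 + j : ℕ):ℝ) ^ (p + 1)) (d - 2)
      calc (∑ j ∈ range (d - 2), (((1 + j : ℕ):ℝ) ^ (p + 1) - ((2 + j : ℕ):ℝ) ^ (p + 1)))
          = ∑ j ∈ range (d - 2),
            (((1 + j : ℕ):ℝ) ^ (p + 1) - ((1 + (j + 1) : ℕ):ℝ) ^ (p + 1)) :=
            Finset.sum_congr rfl fun j _ => by rw [e j]
        _ = ((1 + 0 : ℕ):ℝ) ^ (p + 1) - ((1 + (d - 2) : ℕ):ℝ) ^ (p + 1) := this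
        _ ≤ 1 := by
            norm_num
            exact Real.rpow_nonneg (by positivity) _
    have : (∑ j ∈ range (d - 2),
        (((1 + j : ℕ):ℝ) ^ (p + 1) - ((2 + j : ℕ):ℝ) ^ (p + 1))) / (-1 - p) ≤ 1 / (-1 - p) := by
      gcongr
    linarith

private lemma rdz_T_eq (d : ℕ) :
    ∑ r ∈ Ico 1 d, (r : ℝ) ^ (-1 : ℝ) ≤ 1 + Real.log d := by
  rcases le_or_gt d 2 with hd | hd
  · interval_cases d
    · simp
    · simp
    · rw [show Ico 1 2 = {1} from rfl]
      simp [Real.one_rpow]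
      exact Real.log_nonneg (by norm_num)
  · have hsplit : ∑ r ∈ Ico 1 d, (r : ℝ) ^ (-1:ℝ)
        = (1:ℝ) ^ (-1:ℝ) + ∑ r ∈ Ico 2 d, (r : ℝ) ^ (-1:ℝ) := by
      rw [← Nat.cast_one, Finset.sum_eq_sum_Ico_succ_bot (by omega)]
      norm_num
    rw [hsplit, Real.one_rpow]
    have hkey : ∀ j : ℕ, (((2 + j : ℕ) : ℝ)) ^ (-1:ℝ)
        ≤ Real.log ((1 + (j + 1) : ℕ):ℝ) - Real.log ((1 + j : ℕ):ℝ) := by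
      intro j
      have hx : (0:ℝ) < ((1 + j : ℕ) : ℝ) := by positivity
      have h := rdz_key_log hx
      have e : ((1 + j : ℕ) : ℝ) + 1 = ((2 + j : ℕ) : ℝ) := by push_cast; ring
      rw [e] at h
      rw [Real.rpow_neg_one]
      refine h.trans ?_
      have e2 : ((2 + j : ℕ) : ℝ) = ((1 + (j + 1) : ℕ):ℝ) := by push_cast; ring
      rw [e2]
    have htel : ∑ r ∈ Ico 2 d, (r : ℝ) ^ (-1:ℝ)
        ≤ ∑ j ∈ range (d - 2),
            (Real.log ((1 + (j + 1) : ℕ):ℝ) - Real.log ((1 + j : ℕ):ℝ)) := by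
      rw [Finset.sum_Ico_eq_sum_range]
      exact Finset.sum_le_sum fun j _ => hkey j
    rw [Finset.sum_range_sub (fun j => Real.log ((1 + j : ℕ):ℝ))] at htel
    have hlog : Real.log ((1 + (d - 2) : ℕ):ℝ) - Real.log ((1 + 0 : ℕ):ℝ) ≤ Real.log d := by
      have e0 : ((1 + 0 : ℕ):ℝ) = 1 := by norm_num
      rw [e0, Real.log_one, sub_zero]
      have e1 : 1 + (d - 2) = d - 1 := by omega
      rw [e1]
      apply Real.log_le_log (by exact_mod_cast (by omega : 0 < d - 1) : (0:ℝ) < ((d - 1 : ℕ):ℝ))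
      exact_mod_cast Nat.sub_le d 1
    linarith

private lemma rdz_T_gt {p : ℝ} (hp1 : -1 < p) (hp2 : p < 0) (d : ℕ) :
    ∑ r ∈ Ico 1 d, (r : ℝ) ^ p ≤ (d : ℝ) ^ (p + 1) / (p + 1) := by
  have hp1' : (0:ℝ) < p + 1 := by linarith
  rcases Nat.eq_zero_or_pos d with rfl | hd
  · simp only [Nat.cast_zero, Ico_self, Finset.sum_empty]
    positivity
  · have hkey : ∀ j : ℕ, (p + 1) * (((1 + j : ℕ):ℝ)) ^ p
        ≤ ((1 + j : ℕ):ℝ) ^ (p + 1) - ((j : ℕ):ℝ) ^ (p + 1) := by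
      intro j
      match j with
      | 0 =>
        simp [Real.one_rpow, Real.zero_rpow (ne_of_gt hp1')]
        linarith
      | (n + 1) =>
        have hx : (0:ℝ) < ((n + 1 : ℕ) : ℝ) := by positivity
        have h := rdz_key_ge hp2 hp1' hx
        have e : ((n + 1 : ℕ) : ℝ) + 1 = ((1 + (n + 1) : ℕ) : ℝ) := by push_cast; ring
        rw [e] at h
        exact h
    have hmul : (p + 1) * ∑ r ∈ Ico 1 d, (r : ℝ) ^ p
        ≤ ((d - 1 : ℕ):ℝ) ^ (p + 1) := by
      rw [Finset.sum_Ico_eq_sum_range, Finset.mul_sum]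
      calc ∑ j ∈ range (d - 1), (p + 1) * ((1 + j : ℕ):ℝ) ^ p
          ≤ ∑ j ∈ range (d - 1), (((1 + j : ℕ):ℝ) ^ (p + 1) - ((j : ℕ):ℝ) ^ (p + 1)) :=
            Finset.sum_le_sum fun j _ => hkey j
        _ = ∑ j ∈ range (d - 1), ((((j + 1 : ℕ)):ℝ) ^ (p + 1) - ((j : ℕ):ℝ) ^ (p + 1)) :=
            Finset.sum_congr rfl fun j _ => by rw [Nat.add_comm]
        _ = ((d - 1 : ℕ):ℝ) ^ (p + 1) - ((0 : ℕ):ℝ) ^ (p + 1) :=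
            Finset.sum_range_sub (fun j => ((j : ℕ):ℝ) ^ (p + 1)) (d - 1)
        _ = ((d - 1 : ℕ):ℝ) ^ (p + 1) := by
            simp [Real.zero_rpow (ne_of_gt hp1')]
    have hle : ((d - 1 : ℕ):ℝ) ^ (p + 1) ≤ (d : ℝ) ^ (p + 1) := by
      apply Real.rpow_le_rpow (by positivity) _ hp1'.le
      exact_mod_cast Nat.sub_le d 1
    rw [le_div_iff₀ hp1']
    nlinarith [hmul, hle]

private lemma rdz_mul_integrable {Ω : Type*} [MeasurableSpace Ω] {μ : Measure Ω}
    {f g : Ω → ℝ} (hf : MemLp f 2 μ) (hg : MemLp g 2 μ) :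
    Integrable (fun ω => f ω * g ω) μ := by
  have := hf.smul hg (r := 1)
  simpa [smul_eq_mul, mul_comm, Pi.mul_def] using memLp_one_iff_integrable.mp this

private lemma rdz_cov {Ω : Type*} [MeasurableSpace Ω] (μ : Measure Ω) (H : ℝ)
    (Z : ℕ → Ω → ℝ) (hL2 : ∀ t, MemLp (Z t) 2 μ)
    (hcov : ∀ s t : ℕ, ∫ ω, Z t ω * Z s ω ∂μ
      = ((t : ℝ) ^ (2 * H) + (s : ℝ) ^ (2 * H) - |(t : ℝ) - s| ^ (2 * H)) / 2)
    (k l : ℕ) :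
    ∫ ω, (Z (k + 1) ω - Z k ω) * (Z (l + 1) ω - Z l ω) ∂μ = rdzG H ((k : ℝ) - l) := by
  have hint : ∀ a b : ℕ, Integrable (fun ω => Z a ω * Z b ω) μ :=
    fun a b => rdz_mul_integrable (hL2 a) (hL2 b)
  have h1 : Integrable (fun ω => Z (k + 1) ω * Z (l + 1) ω - Z (k + 1) ω * Z l ω) μ :=
    (hint _ _).sub (hint _ _)
  have h2 : Integrable (fun ω => Z k ω * Z (l + 1) ω - Z k ω * Z l ω) μ :=
    (hint _ _).sub (hint _ _)
  have expand : (fun ω => (Z (k + 1) ω - Z k ω) * (Z (l + 1) ω - Z l ω))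
      = fun ω => (Z (k + 1) ω * Z (l + 1) ω - Z (k + 1) ω * Z l ω)
        - (Z k ω * Z (l + 1) ω - Z k ω * Z l ω) := by
    funext ω; ring
  rw [show (∫ ω, (Z (k + 1) ω - Z k ω) * (Z (l + 1) ω - Z l ω) ∂μ)
      = ∫ ω, ((Z (k + 1) ω * Z (l + 1) ω - Z (k + 1) ω * Z l ω)
        - (Z k ω * Z (l + 1) ω - Z k ω * Z l ω)) ∂μ from by rw [← expand],
    integral_sub h1 h2,
    integral_sub (hint (k + 1) (l + 1)) (hint (k + 1) l),
    integral_sub (hint k (l + 1)) (hint k l),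
    hcov (l + 1) (k + 1), hcov l (k + 1), hcov (l + 1) k, hcov l k]
  unfold rdzG
  push_cast
  rw [show ((k:ℝ) + 1) - ((l:ℝ) + 1) = (k:ℝ) - l by ring,
    show ((k:ℝ) + 1) - (l:ℝ) = (k:ℝ) - l + 1 by ring,
    show (k:ℝ) - ((l:ℝ) + 1) = (k:ℝ) - l - 1 by ring]
  ring

private lemma rdz_moment {Ω : Type*} [MeasurableSpace Ω] (μ : Measure Ω)
    [IsProbabilityMeasure μ]
    (Z1 Z2 : ℕ → Ω → ℝ)
    (hL2_1 : ∀ t, MemLp (Z1 t) 2 μ) (hL2_2 : ∀ t, MemLp (Z2 t) 2 μ)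
    (hindep : IndepFun (fun ω => (fun t : ℕ => Z1 t ω))
      (fun ω => (fun t : ℕ => Z2 t ω)) μ) (d : ℕ) :
    ∫ ω, (∑ k ∈ range d, (Z1 (k + 1) ω - Z1 k ω) * (Z2 (k + 1) ω - Z2 k ω)) ^ 2 ∂μ
      = ∑ k ∈ range d, ∑ l ∈ range d,
          (∫ ω, (Z1 (k + 1) ω - Z1 k ω) * (Z1 (l + 1) ω - Z1 l ω) ∂μ)
          * (∫ ω, (Z2 (k + 1) ω - Z2 k ω) * (Z2 (l + 1) ω - Z2 l ω) ∂μ) := by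
  set A : ℕ → ℕ → Ω → ℝ :=
    fun k l ω => (Z1 (k + 1) ω - Z1 k ω) * (Z1 (l + 1) ω - Z1 l ω) with hA
  set B : ℕ → ℕ → Ω → ℝ :=
    fun k l ω => (Z2 (k + 1) ω - Z2 k ω) * (Z2 (l + 1) ω - Z2 l ω) with hB
  have hAint : ∀ k l, Integrable (A k l) μ := fun k l =>
    rdz_mul_integrable ((hL2_1 (k + 1)).sub (hL2_1 k)) ((hL2_1 (l + 1)).sub (hL2_1 l))
  have hBint : ∀ k l, Integrable (B k l) μ := fun k l =>
    rdz_mul_integrable ((hL2_2 (k + 1)).sub (hL2_2 k)) ((hL2_2 (l + 1)).sub (hL2_2 l))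
  have hABindep : ∀ k l, IndepFun (A k l) (B k l) μ := by
    intro k l
    have hφ : Measurable (fun u : ℕ → ℝ => (u (k + 1) - u k) * (u (l + 1) - u l)) := by
      measurability
    exact hindep.comp hφ hφ
  have hABint : ∀ k l, Integrable (fun ω => A k l ω * B k l ω) μ := fun k l =>
    (hABindep k l).integrable_mul (hAint k l) (hBint k l)
  have hpt : (fun ω => (∑ k ∈ range d, (Z1 (k + 1) ω - Z1 k ω) * (Z2 (k + 1) ω - Z2 k ω)) ^ 2)
      = fun ω => ∑ k ∈ range d, ∑ l ∈ range d, A k l ω * B k l ω := by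
    funext ω
    rw [sq, Finset.sum_mul_sum]
    exact Finset.sum_congr rfl fun k _ => Finset.sum_congr rfl fun l _ => by
      simp only [hA, hB]; ring
  rw [hpt, integral_finset_sum _ (fun k _ =>
    integrable_finset_sum _ (fun l _ => hABint k l))]
  refine Finset.sum_congr rfl fun k _ => ?_
  rw [integral_finset_sum _ (fun l _ => hABint k l)]
  refine Finset.sum_congr rfl fun l _ => ?_
  exact (hABindep k l).integral_fun_mul_eq_mul_integral (hAint k l).1 (hBint k l).1

private lemma rdz_total {H : ℝ} (hH1 : 1 / 2 < H) (hH2 : H < 1) {d : ℕ} (hd : 1 ≤ d) :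
    ∑ k ∈ range d, ∑ l ∈ range d, (rdzG H ((k : ℝ) - l)) ^ 2
      ≤ d * (2 * (1 + 16 * ∑ r ∈ Ico 1 d, (r : ℝ) ^ (4 * H - 4))) := by
  set b : ℕ → ℝ := fun r => if r = 0 then 1 else 16 * (r : ℝ) ^ (4 * H - 4) with hbdef
  have hb : ∀ r, 0 ≤ b r := by
    intro r
    rw [hbdef]
    dsimp only
    split
    · norm_num
    · positivity
  have step1 : ∑ k ∈ range d, ∑ l ∈ range d, (rdzG H ((k : ℝ) - l)) ^ 2
      ≤ ∑ k ∈ range d, ∑ l ∈ range d, b (Nat.dist k l) := by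
    refine Finset.sum_le_sum fun k _ => Finset.sum_le_sum fun l _ => ?_
    rw [rdzG_dist, hbdef]
    exact rdzG_sq_le hH1 hH2 _
  refine step1.trans ((rdz_count b hb d).trans ?_)
  have hbs : ∑ r ∈ range d, b r = 1 + 16 * ∑ r ∈ Ico 1 d, (r : ℝ) ^ (4 * H - 4) := by
    rw [range_eq_Ico, Finset.sum_eq_sum_Ico_succ_bot (by omega : 0 < d)]
    simp only [hbdef, if_pos rfl]
    congr 1
    rw [Finset.mul_sum]
    refine Finset.sum_congr rfl fun r hr => ?_
    rw [if_neg (by have := (Finset.mem_Ico.mp hr).1; omega)]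
  rw [hbs]

private lemma rdz_pow_combine {x : ℝ} (hx : 0 < x) (H : ℝ) :
    (x ^ (1 - H)) ^ 2 * (1 / x) ^ 2 = x ^ (-(2 * H)) := by
  have h1 : (x ^ (1 - H)) ^ 2 = x ^ ((1 - H) * 2) := by
    rw [← Real.rpow_natCast (x ^ (1 - H)) 2, ← Real.rpow_mul hx.le]
    norm_num
  have h2 : (1 / x) ^ 2 = x ^ (-2 : ℝ) := by
    rw [one_div, inv_pow, ← Real.rpow_natCast x 2, ← Real.rpow_neg hx.le]
    norm_num
  rw [h1, h2, ← Real.rpow_add hx]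
  congr 1
  ring

private lemma rdz_scale {x M : ℝ} (hx : 0 < x) (H : ℝ) :
    x ^ (-(2 * H)) * (x * (2 * M)) = 2 * x ^ (1 - 2 * H) * M := by
  have h : x ^ (-(2 * H)) * x = x ^ (1 - 2 * H) := by
    nth_rewrite 2 [← Real.rpow_one x]
    rw [← Real.rpow_add hx]
    congr 1
    ring
  calc x ^ (-(2 * H)) * (x * (2 * M)) = (x ^ (-(2 * H)) * x) * (2 * M) := by ring
    _ = 2 * x ^ (1 - 2 * H) * M := by rw [h]; ring

/-- With `W_d = (1/d) ∑_{k=0}^{d-1} (Z¹_{k+1}-Z¹_k)(Z²_{k+1}-Z²_k)` for two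
independent centered processes with the fBm covariance with Hurst parameter
`H ∈ (1/2,1)`, the renormalized quantity `c⁻¹ d^{1-H} W_d` converges to `0` in
`L²` as `d → ∞`, with `E((d^{1-H}W_d)²) ≤ C d^{1-2H}` for `H ∈ (1/2, 3/4)`,
`≤ C log(d) d^{-1/2}` for `H = 3/4`, and `≤ C d^{2H-2}` for `H ∈ (3/4, 1)`. -/
theorem renormalized_offdiagonal_to_zero
    {Ω : Type*} [MeasurableSpace Ω] (μ : Measure Ω) [IsProbabilityMeasure μ]
    (H : ℝ) (hH1 : 1 / 2 < H) (hH2 : H < 1) (c : ℝ) (hc : 0 < c)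
    (Z1 Z2 : ℕ → Ω → ℝ)
    (hmeas1 : ∀ t, Measurable (Z1 t)) (hmeas2 : ∀ t, Measurable (Z2 t))
    (hL2_1 : ∀ t, MemLp (Z1 t) 2 μ) (hL2_2 : ∀ t, MemLp (Z2 t) 2 μ)
    (hcent1 : ∀ t, ∫ ω, Z1 t ω ∂μ = 0) (hcent2 : ∀ t, ∫ ω, Z2 t ω ∂μ = 0)
    (hcov1 : ∀ s t : ℕ, ∫ ω, Z1 t ω * Z1 s ω ∂μ
      = ((t : ℝ) ^ (2 * H) + (s : ℝ) ^ (2 * H) - |(t : ℝ) - s| ^ (2 * H)) / 2)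
    (hcov2 : ∀ s t : ℕ, ∫ ω, Z2 t ω * Z2 s ω ∂μ
      = ((t : ℝ) ^ (2 * H) + (s : ℝ) ^ (2 * H) - |(t : ℝ) - s| ^ (2 * H)) / 2)
    (hindep : IndepFun (fun ω => (fun t : ℕ => Z1 t ω))
      (fun ω => (fun t : ℕ => Z2 t ω)) μ)
    (W : ℕ → Ω → ℝ)
    (hW : ∀ d ω, W d ω = (1 / (d : ℝ)) * ∑ k ∈ range d,
      (Z1 (k + 1) ω - Z1 k ω) * (Z2 (k + 1) ω - Z2 k ω)) :
    Tendsto (fun d : ℕ =>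
        ∫ ω, (c⁻¹ * (d : ℝ) ^ (1 - H) * W d ω) ^ 2 ∂μ) atTop (nhds 0)
    ∧ ∃ C : ℝ, 0 < C ∧ ∀ d : ℕ, 2 ≤ d →
        ((H < 3 / 4 →
            ∫ ω, ((d : ℝ) ^ (1 - H) * W d ω) ^ 2 ∂μ ≤ C * (d : ℝ) ^ (1 - 2 * H))
          ∧ (H = 3 / 4 →
            ∫ ω, ((d : ℝ) ^ (1 - H) * W d ω) ^ 2 ∂μ
              ≤ C * Real.log d * (d : ℝ) ^ (-(1 / 2) : ℝ))
          ∧ (3 / 4 < H →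
            ∫ ω, ((d : ℝ) ^ (1 - H) * W d ω) ^ 2 ∂μ ≤ C * (d : ℝ) ^ (2 * H - 2))) := by
  -- second moment identity
  have hmain : ∀ d : ℕ, ∫ ω, (W d ω) ^ 2 ∂μ
      = (1 / (d : ℝ)) ^ 2 * ∑ k ∈ range d, ∑ l ∈ range d, (rdzG H ((k : ℝ) - l)) ^ 2 := by
    intro d
    have e : (fun ω => (W d ω) ^ 2)
        = fun ω => (1 / (d : ℝ)) ^ 2
          * ((∑ k ∈ range d, (Z1 (k + 1) ω - Z1 k ω) * (Z2 (k + 1) ω - Z2 k ω)) ^ 2) :=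
      funext fun ω => by rw [hW d ω]; ring
    rw [e, integral_const_mul, rdz_moment μ Z1 Z2 hL2_1 hL2_2 hindep d]
    congr 1
    refine Finset.sum_congr rfl fun k _ => Finset.sum_congr rfl fun l _ => ?_
    rw [rdz_cov μ H Z1 hL2_1 hcov1 k l, rdz_cov μ H Z2 hL2_2 hcov2 k l]
    exact (sq _).symm
  -- master bound
  have hbound : ∀ d : ℕ, 2 ≤ d → ∫ ω, ((d : ℝ) ^ (1 - H) * W d ω) ^ 2 ∂μ
      ≤ 2 * (d : ℝ) ^ (1 - 2 * H) * (1 + 16 * ∑ r ∈ Ico 1 d, (r : ℝ) ^ (4 * H - 4)) := by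
    intro d hd
    have hd0 : (0:ℝ) < (d : ℝ) := by exact_mod_cast (by omega : 0 < d)
    have e : (fun ω => ((d : ℝ) ^ (1 - H) * W d ω) ^ 2)
        = fun ω => ((d : ℝ) ^ (1 - H)) ^ 2 * (W d ω) ^ 2 := funext fun ω => by ring
    calc ∫ ω, ((d : ℝ) ^ (1 - H) * W d ω) ^ 2 ∂μ
        = ((d : ℝ) ^ (1 - H)) ^ 2 * ∫ ω, (W d ω) ^ 2 ∂μ := by rw [e, integral_const_mul]
      _ = ((d : ℝ) ^ (1 - H)) ^ 2 * ((1 / (d : ℝ)) ^ 2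
            * ∑ k ∈ range d, ∑ l ∈ range d, (rdzG H ((k : ℝ) - l)) ^ 2) := by rw [hmain d]
      _ = (d : ℝ) ^ (-(2 * H))
            * ∑ k ∈ range d, ∑ l ∈ range d, (rdzG H ((k : ℝ) - l)) ^ 2 := by
          rw [← mul_assoc, rdz_pow_combine hd0]
      _ ≤ (d : ℝ) ^ (-(2 * H))
            * ((d : ℝ) * (2 * (1 + 16 * ∑ r ∈ Ico 1 d, (r : ℝ) ^ (4 * H - 4)))) :=
          mul_le_mul_of_nonneg_left (rdz_total hH1 hH2 (by omega)) (Real.rpow_nonneg hd0.le _)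
      _ = 2 * (d : ℝ) ^ (1 - 2 * H)
            * (1 + 16 * ∑ r ∈ Ico 1 d, (r : ℝ) ^ (4 * H - 4)) := rdz_scale hd0 H
  have hTnn : ∀ d : ℕ, 0 ≤ ∑ r ∈ Ico 1 d, (r : ℝ) ^ (4 * H - 4) :=
    fun d => Finset.sum_nonneg fun r _ => Real.rpow_nonneg (Nat.cast_nonneg r) _
  -- the existential part
  have hEx : ∃ C : ℝ, 0 < C ∧ ∀ d : ℕ, 2 ≤ d →
      ((H < 3 / 4 →
          ∫ ω, ((d : ℝ) ^ (1 - H) * W d ω) ^ 2 ∂μ ≤ C * (d : ℝ) ^ (1 - 2 * H))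
        ∧ (H = 3 / 4 →
          ∫ ω, ((d : ℝ) ^ (1 - H) * W d ω) ^ 2 ∂μ
            ≤ C * Real.log d * (d : ℝ) ^ (-(1 / 2) : ℝ))
        ∧ (3 / 4 < H →
          ∫ ω, ((d : ℝ) ^ (1 - H) * W d ω) ^ 2 ∂μ ≤ C * (d : ℝ) ^ (2 * H - 2))) := by
    rcases lt_trichotomy H (3 / 4) with hlt | heq | hgt
    · -- H < 3/4
      have h34 : (0:ℝ) < 3 - 4 * H := by linarith
      refine ⟨34 + 32 / (3 - 4 * H), by positivity, fun d hd => ?_⟩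
      refine ⟨fun _ => ?_, fun h' => by linarith, fun h' => by linarith⟩
      have hdnn : (0:ℝ) ≤ (d : ℝ) ^ (1 - 2 * H) := Real.rpow_nonneg (Nat.cast_nonneg d) _
      have hT := rdz_T_lt (by linarith : 4 * H - 4 < -1) d
      rw [show -1 - (4 * H - 4) = 3 - 4 * H by ring] at hT
      calc ∫ ω, ((d : ℝ) ^ (1 - H) * W d ω) ^ 2 ∂μ
          ≤ 2 * (d : ℝ) ^ (1 - 2 * H)
            * (1 + 16 * ∑ r ∈ Ico 1 d, (r : ℝ) ^ (4 * H - 4)) := hbound d hd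
        _ ≤ 2 * (d : ℝ) ^ (1 - 2 * H) * (1 + 16 * (1 + 1 / (3 - 4 * H))) :=
            mul_le_mul_of_nonneg_left (by linarith) (by positivity)
        _ = (34 + 32 / (3 - 4 * H)) * (d : ℝ) ^ (1 - 2 * H) := by ring
    · -- H = 3/4
      subst heq
      refine ⟨100, by norm_num, fun d hd => ?_⟩
      refine ⟨fun h' => by linarith, fun _ => ?_, fun h' => by linarith⟩
      have hdnn : (0:ℝ) ≤ (d : ℝ) ^ (-(1 / 2) : ℝ) := Real.rpow_nonneg (Nat.cast_nonneg d) _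
      have hT := rdz_T_eq d
      have hlogd : (1:ℝ) / 2 ≤ Real.log d := by
        have h2d : Real.log 2 ≤ Real.log d :=
          Real.log_le_log (by norm_num) (by exact_mod_cast hd)
        have := Real.log_two_gt_d9
        linarith
      have hb := hbound d hd
      rw [show (1 - 2 * (3 / 4 : ℝ)) = (-(1 / 2) : ℝ) by norm_num,
        show (4 * (3 / 4 : ℝ) - 4) = (-1 : ℝ) by norm_num] at hb
      calc ∫ ω, ((d : ℝ) ^ (1 - (3 / 4 : ℝ)) * W d ω) ^ 2 ∂μ
          ≤ 2 * (d : ℝ) ^ (-(1 / 2) : ℝ)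
            * (1 + 16 * ∑ r ∈ Ico 1 d, (r : ℝ) ^ (-1 : ℝ)) := hb
        _ ≤ 2 * (d : ℝ) ^ (-(1 / 2) : ℝ) * (50 * Real.log d) :=
            mul_le_mul_of_nonneg_left (by linarith) (by positivity)
        _ = 100 * Real.log d * (d : ℝ) ^ (-(1 / 2) : ℝ) := by ring
    · -- H > 3/4
      have h43 : (0:ℝ) < 4 * H - 3 := by linarith
      refine ⟨2 + 32 / (4 * H - 3), by positivity, fun d hd => ?_⟩
      refine ⟨fun h' => by linarith, fun h' => by linarith, fun _ => ?_⟩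
      have hd1 : (1:ℝ) ≤ (d : ℝ) := by exact_mod_cast (by omega : 1 ≤ d)
      have hd0 : (0:ℝ) < (d : ℝ) := by linarith
      have hT := rdz_T_gt (by linarith : (-1:ℝ) < 4 * H - 4) (by linarith) d
      rw [show (4 * H - 4 + 1) = 4 * H - 3 by ring] at hT
      have e1 : (d : ℝ) ^ (1 - 2 * H) * (d : ℝ) ^ (4 * H - 3) = (d : ℝ) ^ (2 * H - 2) := by
        rw [← Real.rpow_add hd0]
        congr 1
        ring
      have e2 : (d : ℝ) ^ (1 - 2 * H) ≤ (d : ℝ) ^ (2 * H - 2) :=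
        Real.rpow_le_rpow_of_exponent_le hd1 (by linarith)
      have hfnn : (0:ℝ) ≤ (d : ℝ) ^ (1 - 2 * H) := Real.rpow_nonneg hd0.le _
      calc ∫ ω, ((d : ℝ) ^ (1 - H) * W d ω) ^ 2 ∂μ
          ≤ 2 * (d : ℝ) ^ (1 - 2 * H)
            * (1 + 16 * ∑ r ∈ Ico 1 d, (r : ℝ) ^ (4 * H - 4)) := hbound d hd
        _ ≤ 2 * (d : ℝ) ^ (1 - 2 * H)
            * (1 + 16 * ((d : ℝ) ^ (4 * H - 3) / (4 * H - 3))) :=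
            mul_le_mul_of_nonneg_left (by linarith) (by positivity)
        _ = 2 * (d : ℝ) ^ (1 - 2 * H)
            + (32 / (4 * H - 3)) * ((d : ℝ) ^ (1 - 2 * H) * (d : ℝ) ^ (4 * H - 3)) := by ring
        _ = 2 * (d : ℝ) ^ (1 - 2 * H) + (32 / (4 * H - 3)) * (d : ℝ) ^ (2 * H - 2) := by
            rw [e1]
        _ ≤ 2 * (d : ℝ) ^ (2 * H - 2) + (32 / (4 * H - 3)) * (d : ℝ) ^ (2 * H - 2) := by
            have : (0:ℝ) ≤ 32 / (4 * H - 3) := by positivity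
            nlinarith [e2]
        _ = (2 + 32 / (4 * H - 3)) * (d : ℝ) ^ (2 * H - 2) := by ring
  refine ⟨?_, hEx⟩
  -- convergence to zero
  obtain ⟨C, hC, hCb⟩ := hEx
  have heq : ∀ d : ℕ, ∫ ω, (c⁻¹ * (d : ℝ) ^ (1 - H) * W d ω) ^ 2 ∂μ
      = c⁻¹ ^ 2 * ∫ ω, ((d : ℝ) ^ (1 - H) * W d ω) ^ 2 ∂μ := by
    intro d
    rw [show (fun ω => (c⁻¹ * (d : ℝ) ^ (1 - H) * W d ω) ^ 2)
        = fun ω => c⁻¹ ^ 2 * (((d : ℝ) ^ (1 - H) * W d ω)) ^ 2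
        from funext fun ω => by ring, integral_const_mul]
  have hnn : ∀ d : ℕ, 0 ≤ ∫ ω, (c⁻¹ * (d : ℝ) ^ (1 - H) * W d ω) ^ 2 ∂μ :=
    fun d => integral_nonneg fun ω => sq_nonneg _
  rcases lt_trichotomy H (3 / 4) with hlt | heqH | hgt
  · have htend0 : Tendsto (fun d : ℕ => ((d : ℝ)) ^ (1 - 2 * H)) atTop (nhds 0) := by
      have h0 : Tendsto (fun x : ℝ => x ^ (-(2 * H - 1))) atTop (nhds 0) :=
        tendsto_rpow_neg_atTop (by linarith)
      have h1 := h0.comp (tendsto_natCast_atTop_atTop (R := ℝ))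
      have e : (fun d : ℕ => ((d : ℝ)) ^ (1 - 2 * H))
          = (fun x : ℝ => x ^ (-(2 * H - 1))) ∘ (fun d : ℕ => (d : ℝ)) := by
        funext d
        simp only [Function.comp_apply]
        congr 1
        ring
      rw [e]
      exact h1
    refine squeeze_zero' (g := fun d : ℕ => c⁻¹ ^ 2 * (C * ((d:ℝ)) ^ (1 - 2 * H)))
      (Eventually.of_forall hnn) ?_ ?_
    · filter_upwards [eventually_ge_atTop 2] with d hd
      rw [heq d]
      exact mul_le_mul_of_nonneg_left ((hCb d hd).1 hlt) (sq_nonneg _)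
    · have := (htend0.const_mul C).const_mul (c⁻¹ ^ 2)
      simpa using this
  · have hlog : Tendsto (fun x : ℝ => Real.log x * x ^ (-(1 / 2) : ℝ)) atTop (nhds 0) := by
      have h := (isLittleO_log_rpow_atTop
        (by norm_num : (0:ℝ) < 1 / 2)).tendsto_div_nhds_zero
      apply h.congr'
      filter_upwards [eventually_gt_atTop (0:ℝ)] with x hx
      rw [Real.rpow_neg hx.le, div_eq_mul_inv]
    have htend0 : Tendsto
        (fun d : ℕ => Real.log d * ((d : ℝ)) ^ (-(1 / 2) : ℝ)) atTop (nhds 0) :=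
      hlog.comp (tendsto_natCast_atTop_atTop (R := ℝ))
    refine squeeze_zero'
      (g := fun d : ℕ => c⁻¹ ^ 2 * (C * Real.log d * ((d:ℝ)) ^ (-(1 / 2) : ℝ)))
      (Eventually.of_forall hnn) ?_ ?_
    · filter_upwards [eventually_ge_atTop 2] with d hd
      rw [heq d]
      exact mul_le_mul_of_nonneg_left ((hCb d hd).2.1 heqH) (sq_nonneg _)
    · have := (htend0.const_mul C).const_mul (c⁻¹ ^ 2)
      simpa [mul_assoc] using this
  · have htend0 : Tendsto (fun d : ℕ => ((d : ℝ)) ^ (2 * H - 2)) atTop (nhds 0) := by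
      have h0 : Tendsto (fun x : ℝ => x ^ (-(2 - 2 * H))) atTop (nhds 0) :=
        tendsto_rpow_neg_atTop (by linarith)
      have h1 := h0.comp (tendsto_natCast_atTop_atTop (R := ℝ))
      have e : (fun d : ℕ => ((d : ℝ)) ^ (2 * H - 2))
          = (fun x : ℝ => x ^ (-(2 - 2 * H))) ∘ (fun d : ℕ => (d : ℝ)) := by
        funext d
        simp only [Function.comp_apply]
        congr 1
        ring
      rw [e]
      exact h1
    refine squeeze_zero' (g := fun d : ℕ => c⁻¹ ^ 2 * (C * ((d:ℝ)) ^ (2 * H - 2)))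
      (Eventually.of_forall hnn) ?_ ?_
    · filter_upwards [eventually_ge_atTop 2] with d hd
      rw [heq d]
      exact mul_le_mul_of_nonneg_left ((hCb d hd).2.2 hgt) (sq_nonneg _)
    · have := (htend0.const_mul C).const_mul (c⁻¹ ^ 2)
      simpa using this
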